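/- With the setup of the explicit construction, the permutahedron Π_n (n ≥ 4) admits two maximal matchings M^• and M^∘, each of size n!/3, whose sets of exposed vertices are disjoint; in particular every permutation of [n] is covered by M^• or by M^∘. -/

import Mathlib

/-- A matching of `G`: a set of edges of `G` that are pairwise vertex-disjoint. -/
def IsMatching {V : Type*} (G : SimpleGraph V) (M : Set (Sym2 V)) : Prop :=
  M ⊆ G.edgeSet ∧ ∀ e ∈ M, ∀ f ∈ M, e ≠ f → ∀ v, v ∈ e → v ∉ f

/-- A maximal matching: a matching not properly contained in another matching. -/
def IsMaximalMatching {V : Type*} (G : SimpleGraph V) (M : Set (Sym2 V)) : Prop :=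
  IsMatching G M ∧ ∀ M', IsMatching G M' → M ⊆ M' → M' = M

/-- A vertex is covered by a matching if it is incident to a matching edge. -/
def Covered {V : Type*} (M : Set (Sym2 V)) (v : V) : Prop :=
  ∃ e ∈ M, v ∈ e

/-- An induced 4-cycle of `G`, recorded as its set of four edges. -/
def IsInduced4Cycle {V : Type*} (G : SimpleGraph V) (C : Set (Sym2 V)) : Prop :=
  ∃ a b c d : V, a ≠ c ∧ b ≠ d ∧ G.Adj a b ∧ G.Adj b c ∧ G.Adj c d ∧ G.Adj d a ∧
    ¬ G.Adj a c ∧ ¬ G.Adj b d ∧ C = {s(a,b), s(b,c), s(c,d), s(d,a)}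

/-- `G` is `α`-heavy: every edge `e` lies in at least `α` induced 4-cycles such that
`e` is the only common edge of any two of these cycles. -/
def IsHeavy {V : Type*} (G : SimpleGraph V) (α : ℕ) : Prop :=
  ∀ e ∈ G.edgeSet, ∃ 𝒞 : Set (Set (Sym2 V)),
    α ≤ 𝒞.ncard ∧ (∀ C ∈ 𝒞, IsInduced4Cycle G C ∧ e ∈ C) ∧
    ∀ C ∈ 𝒞, ∀ C' ∈ 𝒞, C ≠ C' → C ∩ C' = {e}

/-- The hypercube graph `Q_n` on binary strings of length `n`:
two strings are adjacent iff they differ in exactly one position. -/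
def hypercube (n : ℕ) : SimpleGraph (Fin n → Bool) :=
  SimpleGraph.fromRel (fun x y => ∃! i, x i ≠ y i)

/-- The permutahedron graph `Π_n` on permutations of `[n]`:
`σ, τ` are adjacent iff `τ = σ * τᵢ` for an adjacent transposition `τᵢ = (i, i+1)`. -/
def permutahedron (n : ℕ) : SimpleGraph (Equiv.Perm (Fin n)) :=
  SimpleGraph.fromRel
    (fun σ τ => ∃ i j : Fin n, (i : ℕ) + 1 = (j : ℕ) ∧ τ = σ * Equiv.swap i j)

/-- The neighborhood of the set `X` inside the set `S`. -/
def nbhdIn {V : Type*} (G : SimpleGraph V) (X S : Set V) : Set V :=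
  {y ∈ S | ∃ x ∈ X, G.Adj x y}

/-- Build a permutation of `Fin 4` from its one-line notation (0-based values). -/
noncomputable def mk4 (f : Fin 4 → Fin 4) (h : Function.Bijective f := by decide) :
    Equiv.Perm (Fin 4) :=
  Equiv.ofBijective f h

/-- The maximal matching `M⁺` of `Π_4` (permutations written one-line, 0-based). -/
def Mplus : Set (Sym2 (Equiv.Perm (Fin 4))) :=
  { s(mk4 ![1,0,2,3], mk4 ![1,2,0,3]),   -- {2134, 2314}
    s(mk4 ![2,1,3,0], mk4 ![1,2,3,0]),   -- {3241, 2341}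
    s(mk4 ![2,3,0,1], mk4 ![2,0,3,1]),   -- {3412, 3142}
    s(mk4 ![1,3,0,2], mk4 ![3,1,0,2]),   -- {2413, 4213}
    s(mk4 ![3,0,2,1], mk4 ![0,3,2,1]),   -- {4132, 1432}
    s(mk4 ![0,1,3,2], mk4 ![0,3,1,2]),   -- {1243, 1423}
    s(mk4 ![2,0,1,3], mk4 ![0,2,1,3]),   -- {3124, 1324}
    s(mk4 ![3,2,1,0], mk4 ![3,1,2,0]) }  -- {4321, 4231}

/-- The maximal matching `M⁻` of `Π_4` (permutations written one-line, 0-based). -/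
def Mminus : Set (Sym2 (Equiv.Perm (Fin 4))) :=
  { s(mk4 ![0,2,1,3], mk4 ![0,1,2,3]),   -- {1324, 1234}
    s(mk4 ![1,0,3,2], mk4 ![1,3,0,2]),   -- {2143, 2413}
    s(mk4 ![3,1,2,0], mk4 ![1,3,2,0]),   -- {4231, 2431}
    s(mk4 ![2,1,0,3], mk4 ![1,2,0,3]),   -- {3214, 2314}
    s(mk4 ![3,0,1,2], mk4 ![0,3,1,2]),   -- {4123, 1423}
    s(mk4 ![2,0,3,1], mk4 ![0,2,3,1]),   -- {3142, 1342}
    s(mk4 ![3,2,0,1], mk4 ![3,0,2,1]),   -- {4312, 4132}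
    s(mk4 ![2,1,3,0], mk4 ![2,3,1,0]) }  -- {3241, 3421}

/-- The set of vertices exposed (covered by no edge) by a matching `M`. -/
def exposedSet {V : Type*} (M : Set (Sym2 V)) : Set V :=
  {v | ¬ Covered M v}

/-- The set of the first four values `{σ_1, σ_2, σ_3, σ_4}` of a permutation of `[n]`
(for `n ≥ 4`); this is the complement `s̄` of the suffix `s = σ_5 … σ_n`. -/
def firstFour (n : ℕ) (hn : 4 ≤ n) (σ : Equiv.Perm (Fin n)) : Finset (Fin n) :=
  Finset.univ.image (fun j : Fin 4 => σ (Fin.castLE hn j))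

lemma firstFour_card (n : ℕ) (hn : 4 ≤ n) (σ : Equiv.Perm (Fin n)) :
    (firstFour n hn σ).card = 4 := by
  rw [firstFour, Finset.card_image_of_injective _
    (show Function.Injective (fun j : Fin 4 => σ (Fin.castLE hn j)) from
      fun a b h => Fin.castLE_injective hn (σ.injective h))]
  simp

/-- The pattern `π` of the first four entries of `σ`: the permutation of `[4]` such that
`σ = φ_s(π)` for the suffix `s` of `σ`, i.e. `σ_j = s̄_{π_j}` for `j ∈ [4]`,
where `s̄_1 < s̄_2 < s̄_3 < s̄_4` are the values not occurring in the suffix. -/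
noncomputable def patt (n : ℕ) (hn : 4 ≤ n) (σ : Equiv.Perm (Fin n)) :
    Equiv.Perm (Fin 4) :=
  Equiv.ofBijective
    (fun j => ((firstFour n hn σ).orderIsoOfFin (firstFour_card n hn σ)).symm
      ⟨σ (Fin.castLE hn j), Finset.mem_image.mpr ⟨j, Finset.mem_univ _, rfl⟩⟩)
    (Finite.injective_iff_bijective.mp (fun a b h => by
      have h2 := EquivLike.injective
        ((firstFour n hn σ).orderIsoOfFin (firstFour_card n hn σ)).symm h
      exact Fin.castLE_injective hn (σ.injective (congrArg Subtype.val h2))))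

/-- The number of inversions of the length-`(n−4)` suffix `s = σ_5 … σ_n` of `σ`. -/
def suffixInv (n : ℕ) (σ : Equiv.Perm (Fin n)) : ℕ :=
  (Finset.univ.filter (fun p : Fin n × Fin n =>
    4 ≤ (p.1 : ℕ) ∧ p.1 < p.2 ∧ σ p.2 < σ p.1)).card

/-- The sum `sum(s̄)` of the four elements of `[n]` not occurring in the suffix of `σ`
(i.e. of its first four values, recorded as 1-based values). -/
def sumBar (n : ℕ) (hn : 4 ≤ n) (σ : Equiv.Perm (Fin n)) : ℕ :=
  ∑ j : Fin 4, ((σ (Fin.castLE hn j) : ℕ) + 1)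

/-- The exponent `inv(s) + sum(s̄)` of the sign `ε(s) = (−1)^{inv(s)+sum(s̄)}` associated
with the suffix `s` of `σ`; `ε(s) = +` iff this number is even. -/
def epsNum (n : ℕ) (hn : 4 ≤ n) (σ : Equiv.Perm (Fin n)) : ℕ :=
  suffixInv n σ + sumBar n hn σ

/-- Two permutations of `[n]` share the same length-`(n−4)` suffix. -/
def sameSuffix (n : ℕ) (σ τ : Equiv.Perm (Fin n)) : Prop :=
  ∀ i : Fin n, 4 ≤ (i : ℕ) → σ i = τ i

/-- The matching `M = ⊔_s φ_s(M^{ε(s)})` of `Π_n`: an edge `{σ, τ}` belongs to `M` iff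
`σ` and `τ` have the same suffix `s` and the patterns of their first four entries form an
edge of `M^{ε(s)}` in `Π_4`. -/
noncomputable def bigM (n : ℕ) (hn : 4 ≤ n) : Set (Sym2 (Equiv.Perm (Fin n))) :=
  {e | ∃ σ τ : Equiv.Perm (Fin n), e = s(σ, τ) ∧ sameSuffix n σ τ ∧
    s(patt n hn σ, patt n hn τ) ∈
      (if Even (epsNum n hn σ) then Mplus else Mminus)}

/-- The companion matching `M^∘ = ⊔_s φ_s(M^{−ε(s)})` of `Π_n`. -/
noncomputable def bigM' (n : ℕ) (hn : 4 ≤ n) : Set (Sym2 (Equiv.Perm (Fin n))) :=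
  {e | ∃ σ τ : Equiv.Perm (Fin n), e = s(σ, τ) ∧ sameSuffix n σ τ ∧
    s(patt n hn σ, patt n hn τ) ∈
      (if Even (epsNum n hn σ) then Mminus else Mplus)}

instance permutahedronDecidableAdj (n : ℕ) : DecidableRel (permutahedron n).Adj := fun a b =>
  decidable_of_iff' _ (SimpleGraph.fromRel_adj _ a b)

def cmk4 (f : Fin 4 → Fin 4) (h : Function.Bijective f := by decide) : Equiv.Perm (Fin 4) :=
  ⟨f, Fintype.bijInv h, Fintype.leftInverse_bijInv h, Fintype.rightInverse_bijInv h⟩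

lemma mk4_eq_cmk4 (f : Fin 4 → Fin 4) (h : Function.Bijective f) : mk4 f h = cmk4 f h :=
  Equiv.ext fun _ => rfl

def MplusF : Finset (Sym2 (Equiv.Perm (Fin 4))) :=
  { s(cmk4 ![1,0,2,3], cmk4 ![1,2,0,3]),
    s(cmk4 ![2,1,3,0], cmk4 ![1,2,3,0]),
    s(cmk4 ![2,3,0,1], cmk4 ![2,0,3,1]),
    s(cmk4 ![1,3,0,2], cmk4 ![3,1,0,2]),
    s(cmk4 ![3,0,2,1], cmk4 ![0,3,2,1]),
    s(cmk4 ![0,1,3,2], cmk4 ![0,3,1,2]),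
    s(cmk4 ![2,0,1,3], cmk4 ![0,2,1,3]),
    s(cmk4 ![3,2,1,0], cmk4 ![3,1,2,0]) }

def MminusF : Finset (Sym2 (Equiv.Perm (Fin 4))) :=
  { s(cmk4 ![0,2,1,3], cmk4 ![0,1,2,3]),
    s(cmk4 ![1,0,3,2], cmk4 ![1,3,0,2]),
    s(cmk4 ![3,1,2,0], cmk4 ![1,3,2,0]),
    s(cmk4 ![2,1,0,3], cmk4 ![1,2,0,3]),
    s(cmk4 ![3,0,1,2], cmk4 ![0,3,1,2]),
    s(cmk4 ![2,0,3,1], cmk4 ![0,2,3,1]),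
    s(cmk4 ![3,2,0,1], cmk4 ![3,0,2,1]),
    s(cmk4 ![2,1,3,0], cmk4 ![2,3,1,0]) }

lemma Mplus_eq : Mplus = (↑MplusF : Set (Sym2 (Equiv.Perm (Fin 4)))) := by
  simp only [Mplus, MplusF, mk4_eq_cmk4, Finset.coe_insert, Finset.coe_singleton]

lemma Mminus_eq : Mminus = (↑MminusF : Set (Sym2 (Equiv.Perm (Fin 4)))) := by
  simp only [Mminus, MminusF, mk4_eq_cmk4, Finset.coe_insert, Finset.coe_singleton]

def CovF (F : Finset (Sym2 (Equiv.Perm (Fin 4)))) (v : Equiv.Perm (Fin 4)) : Prop :=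
  ∃ e ∈ F, v ∈ e

instance (F : Finset (Sym2 (Equiv.Perm (Fin 4)))) (v) : Decidable (CovF F v) := by
  unfold CovF; infer_instance

lemma covered_coe (F : Finset (Sym2 (Equiv.Perm (Fin 4)))) (v) :
    Covered (↑F : Set (Sym2 (Equiv.Perm (Fin 4)))) v ↔ CovF F v := by
  simp [Covered, CovF]

def Rel4 (p q : Equiv.Perm (Fin 4)) : Prop :=
  ∀ j : Fin 4, j ≠ 3 → (q j : ℕ) + (if p 3 < p j then 1 else 0)
    = (p j : ℕ) + (if q 3 < q j then 1 else 0)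

instance (p q : Equiv.Perm (Fin 4)) : Decidable (Rel4 p q) := by
  unfold Rel4; infer_instance

set_option maxHeartbeats 2000000 in
set_option maxRecDepth 10000 in
theorem fact_cross : ∀ π π' : Equiv.Perm (Fin 4), Rel4 π π' →
    ((¬ CovF MplusF π ∧ Even ((π 3 : ℕ) + (π' 3 : ℕ)) → CovF MminusF π') ∧
     (¬ CovF MplusF π ∧ ¬ Even ((π 3 : ℕ) + (π' 3 : ℕ)) → CovF MplusF π') ∧
     (¬ CovF MminusF π ∧ Even ((π 3 : ℕ) + (π' 3 : ℕ)) → CovF MplusF π') ∧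
     (¬ CovF MminusF π ∧ ¬ Even ((π 3 : ℕ) + (π' 3 : ℕ)) → CovF MminusF π')) := by decide

set_option maxHeartbeats 2000000 in
set_option maxRecDepth 10000 in
theorem fact_indep : ∀ π π' : Equiv.Perm (Fin 4), (permutahedron 4).Adj π π' →
    (CovF MplusF π ∨ CovF MplusF π') ∧ (CovF MminusF π ∨ CovF MminusF π') := by decide

theorem fact_cover : ∀ π : Equiv.Perm (Fin 4), CovF MplusF π ∨ CovF MminusF π := by decide

set_option maxHeartbeats 1000000 in
set_option maxRecDepth 10000 in
theorem fact_edges : ∀ π π' : Equiv.Perm (Fin 4),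
    (s(π, π') ∈ MplusF ∨ s(π, π') ∈ MminusF) → (permutahedron 4).Adj π π' := by decide

set_option maxHeartbeats 1000000 in
set_option maxRecDepth 10000 in
theorem fact_disj : ∀ F ∈ [MplusF, MminusF], ∀ e ∈ F, ∀ f ∈ F, e ≠ f →
    ∀ v : Equiv.Perm (Fin 4), v ∈ e → v ∉ f := by decide

theorem fact_card : MplusF.card = 8 ∧ MminusF.card = 8 := by decide
section Machinery

variable {n : ℕ} (hn : 4 ≤ n)

local notation "c4" => Fin.castLE hn

lemma c4_injective : Function.Injective (Fin.castLE hn : Fin 4 → Fin n) :=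
  Fin.castLE_injective hn

/-- apply the order iso of a finset, coerced -/
noncomputable def iota (A : Finset (Fin n)) (hA : A.card = 4) (k : Fin 4) : Fin n :=
  (A.orderIsoOfFin hA k : Fin n)

lemma iota_congr {A B : Finset (Fin n)} (hA : A.card = 4) (hB : B.card = 4)
    (h : A = B) (k : Fin 4) : iota A hA k = iota B hB k := by
  subst h; rfl

lemma iota_injective (A : Finset (Fin n)) (hA : A.card = 4) :
    Function.Injective (iota A hA) := fun a b h => by
  have := (A.orderIsoOfFin hA).injective (Subtype.ext h)
  exact this

lemma iota_lt_iota (A : Finset (Fin n)) (hA : A.card = 4) {k k' : Fin 4} :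
    iota A hA k < iota A hA k' ↔ k < k' := by
  rw [iota, iota, Subtype.coe_lt_coe, OrderIso.lt_iff_lt]

lemma patt_spec (σ : Equiv.Perm (Fin n)) (j : Fin 4) :
    iota (firstFour n hn σ) (firstFour_card n hn σ) (patt n hn σ j) = σ (c4 j) := by
  show (((firstFour n hn σ).orderIsoOfFin (firstFour_card n hn σ))
    (((firstFour n hn σ).orderIsoOfFin (firstFour_card n hn σ)).symm ⟨σ (c4 j), _⟩) : Fin n) = _
  rw [OrderIso.apply_symm_apply]

lemma mem_firstFour {σ : Equiv.Perm (Fin n)} {x : Fin n} :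
    x ∈ firstFour n hn σ ↔ ∃ j : Fin 4, σ (c4 j) = x := by
  simp [firstFour]

lemma mem_firstFour' {σ : Equiv.Perm (Fin n)} {x : Fin n} :
    x ∈ firstFour n hn σ ↔ ((σ⁻¹ x : Fin n) : ℕ) < 4 := by
  rw [mem_firstFour hn]
  constructor
  · rintro ⟨j, rfl⟩
    rw [Equiv.Perm.coe_inv, Equiv.symm_apply_apply]
    exact j.isLt
  · intro h
    exact ⟨⟨(σ⁻¹ x : Fin n), h⟩, by
      rw [show (c4 ⟨(σ⁻¹ x : Fin n), h⟩) = σ⁻¹ x from Fin.ext rfl, Equiv.Perm.coe_inv, Equiv.apply_symm_apply]⟩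

lemma firstFour_eq_of_sameSuffix {σ τ : Equiv.Perm (Fin n)} (h : sameSuffix n σ τ) :
    firstFour n hn σ = firstFour n hn τ := by
  ext x
  rw [mem_firstFour' hn, mem_firstFour' hn]
  constructor
  · intro hx
    by_contra hc
    push_neg at hc
    have : σ (τ⁻¹ x) = x := by rw [h _ hc, Equiv.Perm.coe_inv, Equiv.apply_symm_apply]
    have h2 : (σ⁻¹ x : Fin n) = τ⁻¹ x := by
      conv_lhs => rw [← this]
      rw [Equiv.Perm.coe_inv, Equiv.symm_apply_apply]
    rw [h2] at hx; omega
  · intro hx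
    by_contra hc
    push_neg at hc
    have h1 : τ (σ⁻¹ x) = x := by rw [← h _ hc, Equiv.Perm.coe_inv, Equiv.apply_symm_apply]
    have h2 : (τ⁻¹ x : Fin n) = σ⁻¹ x := by
      conv_lhs => rw [← h1]
      rw [Equiv.Perm.coe_inv, Equiv.symm_apply_apply]
    rw [h2] at hx; omega

end Machinery
section Machinery2

variable {n : ℕ} (hn : 4 ≤ n)

local notation "c4" => Fin.castLE hn

lemma orderIso_rank (A : Finset (Fin n)) (hA : A.card = 4) (y : Fin n) (hy : y ∈ A) :
    (((A.orderIsoOfFin hA).symm ⟨y, hy⟩ : Fin 4) : ℕ) = (A.filter (· < y)).card := by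
  set i := (A.orderIsoOfFin hA).symm ⟨y, hy⟩ with hi
  have hyi : iota A hA i = y := by
    rw [iota, hi, OrderIso.apply_symm_apply]
  have himg : A.filter (· < y) = (Finset.Iio i).image (iota A hA) := by
    ext x
    simp only [Finset.mem_filter, Finset.mem_image, Finset.mem_Iio]
    constructor
    · rintro ⟨hxA, hxy⟩
      refine ⟨(A.orderIsoOfFin hA).symm ⟨x, hxA⟩, ?_, ?_⟩
      · rw [hi, ← OrderIso.lt_iff_lt (A.orderIsoOfFin hA), OrderIso.apply_symm_apply,
          OrderIso.apply_symm_apply, Subtype.mk_lt_mk]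
        exact hxy
      · rw [iota, OrderIso.apply_symm_apply]
    · rintro ⟨k, hk, rfl⟩
      refine ⟨(A.orderIsoOfFin hA k).2, ?_⟩
      rw [← hyi]
      exact (iota_lt_iota A hA).mpr hk
  rw [himg, Finset.card_image_of_injective _ (iota_injective A hA), Fin.card_Iio]

lemma patt_val (σ : Equiv.Perm (Fin n)) (j : Fin 4) :
    ((patt n hn σ j : Fin 4) : ℕ) = ((firstFour n hn σ).filter (· < σ (c4 j))).card :=
  orderIso_rank _ (firstFour_card n hn σ) _ _

/-- extension of a permutation of `Fin 4` to `Fin n`, fixing positions `≥ 4`. -/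
noncomputable def pext (μ : Equiv.Perm (Fin 4)) : Equiv.Perm (Fin n) :=
  μ.viaFintypeEmbedding (Fin.castLEEmb hn)

lemma pext_apply_lt (μ : Equiv.Perm (Fin 4)) (j : Fin 4) :
    pext hn μ (c4 j) = c4 (μ j) :=
  Equiv.Perm.viaFintypeEmbedding_apply_image μ (Fin.castLEEmb hn) j

lemma range_c4 (x : Fin n) : x ∈ Set.range (⇑(Fin.castLEEmb hn)) ↔ (x : ℕ) < 4 := by
  constructor
  · rintro ⟨j, rfl⟩; exact j.isLt
  · intro h; exact ⟨⟨(x : ℕ), h⟩, Fin.ext rfl⟩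

lemma pext_apply_ge (μ : Equiv.Perm (Fin 4)) (x : Fin n) (hx : 4 ≤ (x : ℕ)) :
    pext hn μ x = x :=
  Equiv.Perm.viaFintypeEmbedding_apply_notMem_range μ (Fin.castLEEmb hn)
    (fun hr => by rw [range_c4] at hr; omega)

lemma pext_mul (μ ν : Equiv.Perm (Fin 4)) :
    pext hn μ * pext hn ν = pext hn (μ * ν) := by
  ext x
  rcases lt_or_ge (x : ℕ) 4 with h | h
  · have hx : x = c4 ⟨(x : ℕ), h⟩ := Fin.ext rfl
    rw [hx, Equiv.Perm.mul_apply, pext_apply_lt, pext_apply_lt, pext_apply_lt,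
      Equiv.Perm.mul_apply]
  · rw [Equiv.Perm.mul_apply, pext_apply_ge hn _ _ h, pext_apply_ge hn _ _ h,
      pext_apply_ge hn _ _ h]

lemma sameSuffix_mul_pext (σ : Equiv.Perm (Fin n)) (μ : Equiv.Perm (Fin 4)) :
    sameSuffix n σ (σ * pext hn μ) := fun i hi => by
  rw [Equiv.Perm.mul_apply, pext_apply_ge hn _ _ hi]

lemma sameSuffix_refl (σ : Equiv.Perm (Fin n)) : sameSuffix n σ σ := fun _ _ => rfl

lemma sameSuffix_symm {σ τ : Equiv.Perm (Fin n)} (h : sameSuffix n σ τ) :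
    sameSuffix n τ σ := fun i hi => (h i hi).symm

lemma sameSuffix_trans {σ τ ρ : Equiv.Perm (Fin n)} (h : sameSuffix n σ τ)
    (h' : sameSuffix n τ ρ) : sameSuffix n σ ρ := fun i hi => (h i hi).trans (h' i hi)

/-- a permutation is determined by its suffix together with its pattern -/
lemma eq_of_sameSuffix_patt {σ τ : Equiv.Perm (Fin n)} (h : sameSuffix n σ τ)
    (hp : patt n hn σ = patt n hn τ) : σ = τ := by
  have hA := firstFour_eq_of_sameSuffix hn h
  ext x
  rcases lt_or_ge (x : ℕ) 4 with hx | hx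
  · have hxe : x = c4 ⟨(x : ℕ), hx⟩ := Fin.ext rfl
    rw [hxe, ← patt_spec hn σ, ← patt_spec hn τ, hp,
      iota_congr (firstFour_card n hn σ) (firstFour_card n hn τ) hA]
  · exact congrArg Fin.val (h x hx)

lemma patt_mul_pext (σ : Equiv.Perm (Fin n)) (μ : Equiv.Perm (Fin 4)) :
    patt n hn (σ * pext hn μ) = patt n hn σ * μ := by
  have hss := sameSuffix_mul_pext hn σ μ
  have hA := firstFour_eq_of_sameSuffix hn hss
  ext j
  have h1 : iota _ (firstFour_card n hn (σ * pext hn μ)) (patt n hn (σ * pext hn μ) j)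
      = (σ * pext hn μ) (c4 j) := patt_spec hn _ j
  rw [Equiv.Perm.mul_apply, pext_apply_lt] at h1
  have h2 : iota _ (firstFour_card n hn σ) (patt n hn σ (μ j)) = σ (c4 (μ j)) :=
    patt_spec hn σ (μ j)
  have h3 := iota_congr (firstFour_card n hn (σ * pext hn μ)) (firstFour_card n hn σ)
    hA.symm (patt n hn (σ * pext hn μ) j)
  have := iota_injective _ (firstFour_card n hn σ) (h3.symm.trans (h1.trans h2.symm))
  rw [Equiv.Perm.mul_apply]
  exact congrArg Fin.val this

/-- realize any pattern over the suffix class of `σ` -/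
lemma exists_sameSuffix_patt (σ : Equiv.Perm (Fin n)) (π : Equiv.Perm (Fin 4)) :
    ∃ τ, sameSuffix n σ τ ∧ patt n hn τ = π :=
  ⟨σ * pext hn ((patt n hn σ)⁻¹ * π), sameSuffix_mul_pext hn σ _, by
    rw [patt_mul_pext, mul_inv_cancel_left]⟩

lemma suffixInv_of_sameSuffix {σ τ : Equiv.Perm (Fin n)} (h : sameSuffix n σ τ) :
    suffixInv n σ = suffixInv n τ := by
  unfold suffixInv
  congr 1
  apply Finset.filter_congr
  intro p _
  constructor
  · rintro ⟨h1, h2, h3⟩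
    exact ⟨h1, h2, by rwa [← h p.1 h1, ← h p.2 (by omega : 4 ≤ ((p.2 : Fin n) : ℕ))]⟩
  · rintro ⟨h1, h2, h3⟩
    exact ⟨h1, h2, by rwa [h p.1 h1, h p.2 (by omega : 4 ≤ ((p.2 : Fin n) : ℕ))]⟩

lemma sumBar_of_sameSuffix {σ τ : Equiv.Perm (Fin n)} (h : sameSuffix n σ τ) :
    sumBar n hn σ = sumBar n hn τ := by
  have hA := firstFour_eq_of_sameSuffix hn h
  have hσ : sumBar n hn σ = ∑ x ∈ firstFour n hn σ, ((x : ℕ) + 1) := by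
    rw [firstFour, Finset.sum_image (fun a _ b _ hab =>
      c4_injective hn (σ.injective hab))]
    rfl
  have hτ : sumBar n hn τ = ∑ x ∈ firstFour n hn τ, ((x : ℕ) + 1) := by
    rw [firstFour, Finset.sum_image (fun a _ b _ hab =>
      c4_injective hn (τ.injective hab))]
    rfl
  rw [hσ, hτ, hA]

lemma epsNum_of_sameSuffix {σ τ : Equiv.Perm (Fin n)} (h : sameSuffix n σ τ) :
    epsNum n hn σ = epsNum n hn τ := by
  rw [epsNum, epsNum, suffixInv_of_sameSuffix h, sumBar_of_sameSuffix hn h]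

end Machinery2

section Machinery3

variable {n : ℕ} (hn : 4 ≤ n)

local notation "c4" => Fin.castLE hn

lemma patt_congr {σ τ : Equiv.Perm (Fin n)} (hA : firstFour n hn σ = firstFour n hn τ)
    (h : ∀ j : Fin 4, σ (c4 j) = τ (c4 j)) : patt n hn σ = patt n hn τ := by
  ext j
  have h1 := patt_spec hn σ j
  have h2 := patt_spec hn τ j
  rw [← h j] at h2
  have h3 := iota_congr (firstFour_card n hn σ) (firstFour_card n hn τ) hA
    (patt n hn σ j)
  have := iota_injective _ (firstFour_card n hn τ) ((h3.symm.trans h1).trans h2.symm)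
  exact congrArg Fin.val this

/-- number of suffix positions of `σ` with value less than `x` -/
def Ncnt (σ : Equiv.Perm (Fin n)) (x : Fin n) : ℕ :=
  (Finset.univ.filter (fun p : Fin n => 5 ≤ (p : ℕ) ∧ σ p < x)).card

/-- inversions of σ strictly inside positions ≥ 5 -/
def Xcnt (σ : Equiv.Perm (Fin n)) : ℕ :=
  (Finset.univ.filter (fun p : Fin n × Fin n =>
    5 ≤ (p.1 : ℕ) ∧ p.1 < p.2 ∧ σ p.2 < σ p.1)).card

lemma keyCount (σ : Equiv.Perm (Fin n)) (x : Fin n) (p4 : Fin n) (hp4 : (p4 : ℕ) = 4) :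
    (x : ℕ) = ((firstFour n hn σ).filter (· < x)).card
      + (if σ p4 < x then 1 else 0) + Ncnt σ x := by
  classical
  have e1 : (Finset.univ.filter (fun y : Fin n => y < x)).card = (x : ℕ) := by
    have : Finset.univ.filter (fun y : Fin n => y < x) = Finset.Iio x := by
      ext y; simp [Finset.mem_Iio]
    rw [this, Fin.card_Iio]
  have e2 : Finset.univ.filter (fun y : Fin n => y < x)
      = (Finset.univ.filter (fun p : Fin n => σ p < x)).image σ := by
    ext y
    simp only [Finset.mem_filter, Finset.mem_univ, true_and, Finset.mem_image]
    constructor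
    · intro hy
      exact ⟨σ⁻¹ y, by simpa using hy, by simp⟩
    · rintro ⟨p, hp, rfl⟩; exact hp
  set F1 := Finset.univ.filter (fun p : Fin n => (p : ℕ) < 4 ∧ σ p < x) with hF1
  set F2 := Finset.univ.filter (fun p : Fin n => (p : ℕ) = 4 ∧ σ p < x) with hF2
  set F3 := Finset.univ.filter (fun p : Fin n => 5 ≤ (p : ℕ) ∧ σ p < x) with hF3
  have hsplit : Finset.univ.filter (fun p : Fin n => σ p < x) = F1 ∪ (F2 ∪ F3) := by
    ext p
    simp only [hF1, hF2, hF3, Finset.mem_filter, Finset.mem_univ, true_and,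
      Finset.mem_union]
    have : (p : ℕ) < 4 ∨ (p : ℕ) = 4 ∨ 5 ≤ (p : ℕ) := by omega
    tauto
  have hd1 : Disjoint F1 (F2 ∪ F3) := by
    rw [Finset.disjoint_left]
    intro p hp hp'
    simp only [hF1, hF2, hF3, Finset.mem_filter, Finset.mem_univ, true_and,
      Finset.mem_union] at hp hp'
    omega
  have hd2 : Disjoint F2 F3 := by
    rw [Finset.disjoint_left]
    intro p hp hp'
    simp only [hF2, hF3, Finset.mem_filter, Finset.mem_univ, true_and] at hp hp'
    omega
  have hcard : (Finset.univ.filter (fun p : Fin n => σ p < x)).card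
      = F1.card + (F2.card + F3.card) := by
    rw [hsplit, Finset.card_union_of_disjoint hd1, Finset.card_union_of_disjoint hd2]
  have hc1 : F1.card = ((firstFour n hn σ).filter (· < x)).card := by
    have himg : F1 = (Finset.univ.filter (fun j : Fin 4 => σ (c4 j) < x)).image
        (fun j : Fin 4 => (c4 j : Fin n)) := by
      ext p
      simp only [hF1, Finset.mem_filter, Finset.mem_univ, true_and, Finset.mem_image]
      constructor
      · rintro ⟨h1, h2⟩
        exact ⟨⟨(p : ℕ), h1⟩, by
          rwa [show (c4 (⟨(p : ℕ), h1⟩ : Fin 4)) = p from Fin.ext rfl], Fin.ext rfl⟩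
      · rintro ⟨j, hj, rfl⟩
        exact ⟨j.isLt, hj⟩
    have himg2 : (firstFour n hn σ).filter (· < x)
        = (Finset.univ.filter (fun j : Fin 4 => σ (c4 j) < x)).image
          (fun j : Fin 4 => σ (c4 j)) := by
      rw [firstFour, Finset.filter_image]
    rw [himg, himg2, Finset.card_image_of_injective _ (c4_injective hn),
      Finset.card_image_of_injective _
        (fun a b hab => c4_injective hn (σ.injective hab))]
  have hc2 : F2.card = (if σ p4 < x then 1 else 0) := by
    have : F2 = if σ p4 < x then {p4} else ∅ := by
      ext p
      simp only [hF2, Finset.mem_filter, Finset.mem_univ, true_and]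
      split_ifs with h
      · simp only [Finset.mem_singleton]
        constructor
        · rintro ⟨h1, _⟩; exact Fin.ext (by omega)
        · rintro rfl; exact ⟨hp4, h⟩
      · simp only [Finset.notMem_empty, iff_false, not_and]
        intro h1 h2
        exact h (by rwa [show p4 = p from Fin.ext (by omega)])
    rw [this]
    split_ifs <;> simp
  rw [← e1, e2, Finset.card_image_of_injective _ σ.injective, hcard, hc1, hc2]
  have : Ncnt σ x = F3.card := rfl
  rw [this]; ring

lemma suffixSplit (σ : Equiv.Perm (Fin n)) (p4 : Fin n) (hp4 : (p4 : ℕ) = 4) :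
    suffixInv n σ = Ncnt σ (σ p4) + Xcnt σ := by
  classical
  set S2 := Finset.univ.filter (fun p : Fin n × Fin n =>
    (p.1 : ℕ) = 4 ∧ p.1 < p.2 ∧ σ p.2 < σ p.1) with hS2
  set S3 := Finset.univ.filter (fun p : Fin n × Fin n =>
    5 ≤ (p.1 : ℕ) ∧ p.1 < p.2 ∧ σ p.2 < σ p.1) with hS3
  have hsplit : Finset.univ.filter (fun p : Fin n × Fin n =>
      4 ≤ (p.1 : ℕ) ∧ p.1 < p.2 ∧ σ p.2 < σ p.1) = S2 ∪ S3 := by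
    ext p
    simp only [hS2, hS3, Finset.mem_filter, Finset.mem_univ, true_and, Finset.mem_union]
    have : ((4 : ℕ) ≤ (p.1 : ℕ)) ↔ ((p.1 : ℕ) = 4 ∨ 5 ≤ (p.1 : ℕ)) := by omega
    tauto
  have hd : Disjoint S2 S3 := by
    rw [Finset.disjoint_left]
    intro p hp hp'
    simp only [hS2, hS3, Finset.mem_filter, Finset.mem_univ, true_and] at hp hp'
    omega
  have hc2 : S2.card = Ncnt σ (σ p4) := by
    have himg : S2 = (Finset.univ.filter (fun q : Fin n => 5 ≤ (q : ℕ) ∧ σ q < σ p4)).image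
        (fun q => (p4, q)) := by
      ext p
      simp only [hS2, Finset.mem_filter, Finset.mem_univ, true_and, Finset.mem_image]
      constructor
      · rintro ⟨h1, h2, h3⟩
        have hp1 : p.1 = p4 := Fin.ext (by omega)
        refine ⟨p.2, ⟨?_, by rwa [← hp1]⟩, by rw [← hp1]⟩
        have := h2
        rw [Fin.lt_def, h1] at this
        omega
      · rintro ⟨q, ⟨hq1, hq2⟩, rfl⟩
        refine ⟨hp4, ?_, hq2⟩
        show p4 < q
        rw [Fin.lt_def]; omega
    rw [himg, Finset.card_image_of_injective _ (fun a b hab => (Prod.ext_iff.mp hab).2)]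
    rfl
  rw [suffixInv, hsplit, Finset.card_union_of_disjoint hd, hc2]
  rfl

end Machinery3
section Parity

variable {n : ℕ} (hn : 4 ≤ n)

local notation "c4" => Fin.castLE hn

lemma val_swap (i j x : Fin n) :
    ((Equiv.swap i j x : Fin n) : ℕ)
      = if (x : ℕ) = (i : ℕ) then (j : ℕ) else if (x : ℕ) = (j : ℕ) then (i : ℕ)
        else (x : ℕ) := by
  by_cases h1 : x = i
  · subst h1
    rw [Equiv.swap_apply_left, if_pos rfl]
  · by_cases h2 : x = j
    · subst h2
      rw [Equiv.swap_apply_right, if_neg (fun hv => h1 (Fin.ext hv)), if_pos rfl]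
    · rw [Equiv.swap_apply_of_ne_of_ne h1 h2, if_neg (fun hv => h1 (Fin.ext hv)),
        if_neg (fun hv => h2 (Fin.ext hv))]

/-- Parity lemma for a swap strictly inside the suffix. -/
lemma parity_swap_ge4 (σ : Equiv.Perm (Fin n)) (i j : Fin n)
    (hi : 4 ≤ (i : ℕ)) (hij : (i : ℕ) + 1 = (j : ℕ)) :
    patt n hn (σ * Equiv.swap i j) = patt n hn σ ∧
    (epsNum n hn σ + epsNum n hn (σ * Equiv.swap i j)) % 2 = 1 := by
  classical
  set τ := σ * Equiv.swap i j with hτ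
  have hine : i ≠ j := fun h => by rw [h] at hij; omega
  have happ : ∀ x : Fin n, τ x = σ (Equiv.swap i j x) := fun x => rfl
  have hff : ∀ j' : Fin 4, τ (c4 j') = σ (c4 j') := by
    intro j'
    rw [happ, Equiv.swap_apply_of_ne_of_ne]
    · exact fun h => by have := congrArg Fin.val h; simp at this; omega
    · exact fun h => by have := congrArg Fin.val h; simp at this; omega
  have hA : firstFour n hn τ = firstFour n hn σ := by
    ext x
    rw [mem_firstFour' hn, mem_firstFour' hn]
    have hinv : (τ⁻¹ x : Fin n) = Equiv.swap i j (σ⁻¹ x) := by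
      rw [hτ, mul_inv_rev, Equiv.Perm.mul_apply, Equiv.swap_inv]
    rw [hinv, val_swap]
    split_ifs <;> omega
  have hpatt : patt n hn τ = patt n hn σ := patt_congr hn hA hff
  refine ⟨hpatt, ?_⟩
  have hsb : sumBar n hn τ = sumBar n hn σ :=
    Finset.sum_congr rfl fun j' _ => by rw [hff j']
  set Sσ := Finset.univ.filter (fun p : Fin n × Fin n =>
    4 ≤ (p.1 : ℕ) ∧ p.1 < p.2 ∧ σ p.2 < σ p.1) with hSσ
  set Sτ := Finset.univ.filter (fun p : Fin n × Fin n =>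
    4 ≤ (p.1 : ℕ) ∧ p.1 < p.2 ∧ τ p.2 < τ p.1) with hSτ
  set m : Fin n × Fin n → Fin n × Fin n :=
    fun p => (Equiv.swap i j p.1, Equiv.swap i j p.2) with hm
  have hminv : ∀ p, m (m p) = p := by
    intro p
    simp only [hm, Equiv.swap_apply_self]
  have hminj : Function.Injective m := fun a b h => by
    rw [← hminv a, h, hminv]
  have hkey : ∀ p : Fin n × Fin n,
      p ∈ Sτ.erase (i, j) ↔ m p ∈ Sσ.erase (i, j) := by
    intro p
    obtain ⟨p1, p2⟩ := p
    simp only [hm, hSσ, hSτ, Finset.mem_erase, Finset.mem_filter, Finset.mem_univ,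
      true_and, Ne, Prod.mk.injEq, not_and]
    rw [← happ p1, ← happ p2]
    have hv1 := val_swap i j p1
    have hv2 := val_swap i j p2
    simp only [Fin.lt_def, Fin.ext_iff]
    split_ifs at hv1 hv2 <;> omega
  have himg : (Sσ.erase (i, j)).image m = Sτ.erase (i, j) := by
    ext q
    rw [Finset.mem_image]
    constructor
    · rintro ⟨p, hp, rfl⟩
      rw [hkey, hminv]
      exact hp
    · intro hq
      exact ⟨m q, (hkey q).mp hq, hminv q⟩
  have hcarde : (Sτ.erase (i, j)).card = (Sσ.erase (i, j)).card := by
    rw [← himg, Finset.card_image_of_injective _ hminj]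
  have hmem : (i, j) ∈ Sτ ↔ (i, j) ∉ Sσ := by
    simp only [hSσ, hSτ, Finset.mem_filter, Finset.mem_univ, true_and]
    have h1 : τ j = σ i := by rw [happ, Equiv.swap_apply_right]
    have h2 : τ i = σ j := by rw [happ, Equiv.swap_apply_left]
    have h3 : σ i ≠ σ j := fun h => hine (σ.injective h)
    have h4 : i < j := by rw [Fin.lt_def]; omega
    rw [h1, h2]
    constructor
    · rintro ⟨-, -, hlt⟩ ⟨-, -, hlt'⟩
      exact absurd (le_antisymm hlt.le hlt'.le) h3
    · intro hns
      refine ⟨hi, h4, ?_⟩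
      rcases lt_trichotomy (σ i) (σ j) with h | h | h
      · exact h
      · exact absurd h h3
      · exact absurd ⟨hi, h4, h⟩ hns
  have hinvs : suffixInv n σ = Sσ.card := by rw [hSσ]; rfl
  have hinvt : suffixInv n τ = Sτ.card := by rw [hSτ]; rfl
  by_cases hm0 : (i, j) ∈ Sσ
  · have hm1 : (i, j) ∉ Sτ := fun h => (hmem.mp h) hm0
    have c1 : Sσ.card = (Sσ.erase (i, j)).card + 1 := by
      rw [Finset.card_erase_of_mem hm0]
      have : 0 < Sσ.card := Finset.card_pos.mpr ⟨_, hm0⟩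
      omega
    have c2 : Sτ.card = (Sτ.erase (i, j)).card := by
      rw [Finset.erase_eq_of_notMem hm1]
    rw [epsNum, epsNum, hinvs, hinvt, c1, c2, hcarde, hsb]
    omega
  · have hm1 : (i, j) ∈ Sτ := hmem.mpr hm0
    have c1 : Sσ.card = (Sσ.erase (i, j)).card := by
      rw [Finset.erase_eq_of_notMem hm0]
    have c2 : Sτ.card = (Sτ.erase (i, j)).card + 1 := by
      rw [Finset.card_erase_of_mem hm1]
      have : 0 < Sτ.card := Finset.card_pos.mpr ⟨_, hm1⟩
      omega
    rw [epsNum, epsNum, hinvs, hinvt, c1, c2, hcarde, hsb]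
    omega

end Parity
section Parity2

variable {n : ℕ} (hn : 4 ≤ n)

local notation "c4" => Fin.castLE hn

/-- Crossing lemma: swap of positions 4 and 5 (0-based 3 and 4). -/
lemma parity_swap_34 (σ : Equiv.Perm (Fin n)) (i j : Fin n)
    (hi : (i : ℕ) = 3) (hj : (j : ℕ) = 4) :
    Rel4 (patt n hn σ) (patt n hn (σ * Equiv.swap i j)) ∧
    (epsNum n hn σ + epsNum n hn (σ * Equiv.swap i j)
      + ((patt n hn σ) 3 : ℕ) + ((patt n hn (σ * Equiv.swap i j)) 3 : ℕ)) % 2 = 1 := by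
  classical
  set τ := σ * Equiv.swap i j with hτ
  have hine : i ≠ j := fun h => by rw [h] at hi; omega
  have happ : ∀ x : Fin n, τ x = σ (Equiv.swap i j x) := fun x => rfl
  have hc43 : (c4 (3 : Fin 4) : Fin n) = i := Fin.ext (by simp only [Fin.coe_castLE, hi]; rfl)
  -- first-three positions unchanged
  have hff : ∀ j' : Fin 4, j' ≠ 3 → τ (c4 j') = σ (c4 j') := by
    intro j' h3
    have hval : (j' : ℕ) < 3 := by
      have := j'.isLt
      rcases Nat.lt_or_ge (j' : ℕ) 3 with h | h
      · exact h
      · exact absurd (Fin.ext (by omega) : j' = 3) h3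
    rw [happ, Equiv.swap_apply_of_ne_of_ne]
    · exact fun h => by have := congrArg Fin.val h; simp [hi] at this; omega
    · exact fun h => by have := congrArg Fin.val h; simp [hj] at this; omega
  have hti : τ (c4 (3 : Fin 4)) = σ j := by rw [hc43, happ, Equiv.swap_apply_left]
  have htj : τ j = σ i := by rw [happ, Equiv.swap_apply_right]
  -- suffix entries (≥ 5) unchanged
  have hsuf : ∀ p : Fin n, 5 ≤ (p : ℕ) → τ p = σ p := by
    intro p hp
    rw [happ, Equiv.swap_apply_of_ne_of_ne]
    · exact fun h => by have := congrArg Fin.val h; omega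
    · exact fun h => by have := congrArg Fin.val h; omega
  have hN : ∀ x : Fin n, Ncnt τ x = Ncnt σ x := by
    intro x
    unfold Ncnt
    congr 1
    apply Finset.filter_congr
    intro p _
    constructor
    · rintro ⟨h1, h2⟩; exact ⟨h1, by rwa [← hsuf p h1]⟩
    · rintro ⟨h1, h2⟩; exact ⟨h1, by rwa [hsuf p h1]⟩
  have hX : Xcnt τ = Xcnt σ := by
    unfold Xcnt
    congr 1
    apply Finset.filter_congr
    intro p _
    have : (p.1 < p.2) → (5 ≤ (p.1 : ℕ)) → 5 ≤ (p.2 : ℕ) := by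
      intro h1 h2; rw [Fin.lt_def] at h1; omega
    constructor
    · rintro ⟨h1, h2, h3⟩
      exact ⟨h1, h2, by rwa [← hsuf p.1 h1, ← hsuf p.2 (this h2 h1)]⟩
    · rintro ⟨h1, h2, h3⟩
      exact ⟨h1, h2, by rwa [hsuf p.1 h1, hsuf p.2 (this h2 h1)]⟩
  -- main counting identities
  have hIσ : ∀ x : Fin n, (x : ℕ) = ((firstFour n hn σ).filter (· < x)).card
      + (if σ j < x then 1 else 0) + Ncnt σ x := fun x => keyCount hn σ x j hj
  have hIτ : ∀ x : Fin n, (x : ℕ) = ((firstFour n hn τ).filter (· < x)).card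
      + (if σ i < x then 1 else 0) + Ncnt σ x := by
    intro x
    have := keyCount hn τ x j hj
    rwa [htj, hN] at this
  -- pattern ranks
  have hrank_σ : ∀ j' : Fin 4, ((patt n hn σ j' : Fin 4) : ℕ)
      = ((firstFour n hn σ).filter (· < σ (c4 j'))).card := fun j' => patt_val hn σ j'
  have hrank_τ : ∀ j' : Fin 4, ((patt n hn τ j' : Fin 4) : ℕ)
      = ((firstFour n hn τ).filter (· < τ (c4 j'))).card := fun j' => patt_val hn τ j'
  -- order-iso comparisons
  have hlt_σ : ∀ j' k' : Fin 4, (patt n hn σ j' < patt n hn σ k') ↔ (σ (c4 j') < σ (c4 k')) := by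
    intro j' k'
    rw [← patt_spec hn σ j', ← patt_spec hn σ k', iota_lt_iota]
  have hlt_τ : ∀ j' k' : Fin 4, (patt n hn τ j' < patt n hn τ k') ↔ (τ (c4 j') < τ (c4 k')) := by
    intro j' k'
    rw [← patt_spec hn τ j', ← patt_spec hn τ k', iota_lt_iota]
  have hRel : Rel4 (patt n hn σ) (patt n hn τ) := by
    intro j' h3
    have hx := hff j' h3
    have e1 := hIσ (σ (c4 j'))
    have e2 := hIτ (σ (c4 j'))
    have E1 : ((patt n hn σ j' : Fin 4) : ℕ)
        = ((firstFour n hn σ).filter (· < σ (c4 j'))).card := hrank_σ j'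
    have E2 : ((patt n hn τ j' : Fin 4) : ℕ)
        = ((firstFour n hn τ).filter (· < σ (c4 j'))).card := by
      rw [hrank_τ j', hx]
    have hiffσ : (patt n hn σ 3 < patt n hn σ j') ↔ (σ i < σ (c4 j')) := by
      rw [hlt_σ, hc43]
    have hiffτ : (patt n hn τ 3 < patt n hn τ j') ↔ (σ j < σ (c4 j')) := by
      rw [hlt_τ, hti, hx]
    rw [if_congr hiffσ rfl rfl, if_congr hiffτ rfl rfl, E1, E2]
    omega
  refine ⟨hRel, ?_⟩
  -- parity computation
  have ea := hIσ (σ i)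
  have ev := hIτ (σ j)
  have hvne : σ i ≠ σ j := fun h => hine (σ.injective h)
  have hif : (if σ j < σ i then 1 else 0) + (if σ i < σ j then 1 else 0) = 1 := by
    rcases lt_trichotomy (σ i) (σ j) with h | h | h
    · rw [if_neg (asymm h), if_pos h]
    · exact absurd h hvne
    · rw [if_pos h, if_neg (asymm h)]
  have hsplitσ : suffixInv n σ = Ncnt σ (σ j) + Xcnt σ := suffixSplit σ j hj
  have hsplitτ : suffixInv n τ = Ncnt σ (σ i) + Xcnt σ := by
    have := suffixSplit τ j hj
    rwa [htj, hN, hX] at this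
  have hsb : sumBar n hn σ + ((σ j : Fin n) : ℕ) = sumBar n hn τ + ((σ i : Fin n) : ℕ) := by
    unfold sumBar
    rw [Fin.sum_univ_four, Fin.sum_univ_four]
    have h0 := hff 0 (by decide)
    have h1 := hff 1 (by decide)
    have h2 := hff 2 (by decide)
    have h3 : τ (c4 (3 : Fin 4)) = σ j := hti
    have h4 : σ (c4 (3 : Fin 4)) = σ i := by rw [hc43]
    rw [h0, h1, h2, h3, h4]
    omega
  have ht : ((patt n hn σ 3 : Fin 4) : ℕ)
      = ((firstFour n hn σ).filter (· < σ i)).card := by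
    rw [hrank_σ 3, hc43]
  have hr : ((patt n hn τ 3 : Fin 4) : ℕ)
      = ((firstFour n hn τ).filter (· < σ j)).card := by
    rw [hrank_τ 3, hti]
  rw [epsNum, epsNum, hsplitσ, hsplitτ, ht, hr]
  omega

end Parity2
section BigMachinery

variable {n : ℕ} (hn : 4 ≤ n)

local notation "c4" => Fin.castLE hn

/-- generic version of `bigM` / `bigM'` -/
def bigMg (n : ℕ) (hn : 4 ≤ n) (M₁ M₂ : Set (Sym2 (Equiv.Perm (Fin 4)))) :
    Set (Sym2 (Equiv.Perm (Fin n))) :=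
  {e | ∃ σ τ : Equiv.Perm (Fin n), e = s(σ, τ) ∧ sameSuffix n σ τ ∧
    s(patt n hn σ, patt n hn τ) ∈ (if Even (epsNum n hn σ) then M₁ else M₂)}

lemma bigM_eq_bigMg : bigM n hn = bigMg n hn Mplus Mminus := rfl

lemma bigM'_eq_bigMg : bigM' n hn = bigMg n hn Mminus Mplus := rfl

lemma bigMg_rep {M₁ M₂ : Set (Sym2 (Equiv.Perm (Fin 4)))} {e : Sym2 (Equiv.Perm (Fin n))}
    (he : e ∈ bigMg n hn M₁ M₂) {v : Equiv.Perm (Fin n)} (hv : v ∈ e) :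
    ∃ ρ, e = s(v, ρ) ∧ sameSuffix n v ρ ∧
      s(patt n hn v, patt n hn ρ) ∈ (if Even (epsNum n hn v) then M₁ else M₂) := by
  obtain ⟨σ, τ, rfl, hss, hm⟩ := he
  rcases Sym2.mem_iff.mp hv with rfl | rfl
  · exact ⟨τ, rfl, hss, hm⟩
  · refine ⟨σ, Sym2.eq_swap, sameSuffix_symm hss, ?_⟩
    rw [show epsNum n hn v = epsNum n hn σ from (epsNum_of_sameSuffix hn hss).symm,
      Sym2.eq_swap]
    exact hm

lemma swap_c4 (k k' x : Fin 4) :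
    Equiv.swap (c4 k : Fin n) (c4 k') (c4 x) = c4 (Equiv.swap k k' x) :=
  Function.Injective.swap_apply (c4_injective hn) k k' x

lemma pext_one : pext hn 1 = 1 := by
  ext x
  rcases lt_or_ge (x : ℕ) 4 with h | h
  · have hx : x = c4 ⟨(x : ℕ), h⟩ := Fin.ext rfl
    rw [hx, pext_apply_lt]
    rfl
  · rw [pext_apply_ge hn _ _ h]
    rfl

lemma pext_swap (k k' : Fin 4) :
    pext hn (Equiv.swap k k') = Equiv.swap (c4 k : Fin n) (c4 k') := by
  ext x
  rcases lt_or_ge (x : ℕ) 4 with h | h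
  · have hx : x = c4 ⟨(x : ℕ), h⟩ := Fin.ext rfl
    rw [hx, pext_apply_lt, swap_c4]
  · rw [pext_apply_ge hn _ _ h, Equiv.swap_apply_of_ne_of_ne]
    · exact fun hc => by have := congrArg Fin.val hc; simp at this; omega
    · exact fun hc => by have := congrArg Fin.val hc; simp at this; omega

lemma lift_edge {σ τ : Equiv.Perm (Fin n)} (hss : sameSuffix n σ τ) {k k' : Fin 4}
    (hp : patt n hn τ = patt n hn σ * Equiv.swap k k') :
    τ = σ * Equiv.swap (c4 k : Fin n) (c4 k') := by
  have h1 : sameSuffix n σ (σ * pext hn (Equiv.swap k k')) :=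
    sameSuffix_mul_pext hn σ _
  have h2 : patt n hn (σ * pext hn (Equiv.swap k k')) = patt n hn σ * Equiv.swap k k' :=
    patt_mul_pext hn σ _
  have h3 : τ = σ * pext hn (Equiv.swap k k') :=
    eq_of_sameSuffix_patt hn (sameSuffix_trans (sameSuffix_symm hss) h1) (hp.trans h2.symm)
  rw [h3, pext_swap]

lemma perm4_adj {π π' : Equiv.Perm (Fin 4)} (h : (permutahedron 4).Adj π π') :
    π ≠ π' ∧ ((∃ k k' : Fin 4, (k : ℕ) + 1 = (k' : ℕ) ∧ π' = π * Equiv.swap k k') ∨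
              (∃ k k' : Fin 4, (k : ℕ) + 1 = (k' : ℕ) ∧ π = π' * Equiv.swap k k')) := by
  rw [permutahedron, SimpleGraph.fromRel_adj] at h
  exact h

lemma bigMg_isMatching {M₁ M₂ : Set (Sym2 (Equiv.Perm (Fin 4)))}
    (h1 : IsMatching (permutahedron 4) M₁) (h2 : IsMatching (permutahedron 4) M₂) :
    IsMatching (permutahedron n) (bigMg n hn M₁ M₂) := by
  constructor
  · rintro e ⟨σ, τ, rfl, hss, hm⟩
    have hadj4 : (permutahedron 4).Adj (patt n hn σ) (patt n hn τ) := by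
      rw [← SimpleGraph.mem_edgeSet]
      split_ifs at hm
      exacts [h1.1 hm, h2.1 hm]
    obtain ⟨hne4, hrel⟩ := perm4_adj hadj4
    have hne : σ ≠ τ := fun h => hne4 (by rw [h])
    rw [SimpleGraph.mem_edgeSet, permutahedron, SimpleGraph.fromRel_adj]
    rcases hrel with ⟨k, k', hk, hp⟩ | ⟨k, k', hk, hp⟩
    · exact ⟨hne, Or.inl ⟨c4 k, c4 k', by simpa using hk, lift_edge hn hss hp⟩⟩
    · exact ⟨hne, Or.inr ⟨c4 k, c4 k', by simpa using hk,
        lift_edge hn (sameSuffix_symm hss) hp⟩⟩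
  · rintro e he f hf hef v hve hvf
    obtain ⟨ρ, he_eq, hss, hm⟩ := bigMg_rep hn he hve
    obtain ⟨ρ', hf_eq, hss', hm'⟩ := bigMg_rep hn hf hvf
    have hMm : IsMatching (permutahedron 4)
        (if Even (epsNum n hn v) then M₁ else M₂) := by
      split_ifs
      exacts [h1, h2]
    by_cases hq : s(patt n hn v, patt n hn ρ) = s(patt n hn v, patt n hn ρ')
    · have hpp : patt n hn ρ = patt n hn ρ' := Sym2.congr_right.mp hq
      have : ρ = ρ' := eq_of_sameSuffix_patt hn
        (sameSuffix_trans (sameSuffix_symm hss) hss') hpp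
      exact hef (by rw [he_eq, hf_eq, this])
    · exact hMm.2 _ hm _ hm' hq (patt n hn v) (Sym2.mem_mk_left _ _) (Sym2.mem_mk_left _ _)

lemma covered_bigMg_iff {M₁ M₂ : Set (Sym2 (Equiv.Perm (Fin 4)))} (v : Equiv.Perm (Fin n)) :
    Covered (bigMg n hn M₁ M₂) v ↔
      Covered (if Even (epsNum n hn v) then M₁ else M₂) (patt n hn v) := by
  constructor
  · rintro ⟨e, he, hv⟩
    obtain ⟨ρ, rfl, hss, hm⟩ := bigMg_rep hn he hv
    exact ⟨_, hm, Sym2.mem_mk_left _ _⟩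
  · rintro ⟨E, hE, hv⟩
    obtain ⟨π₂, rfl⟩ := Sym2.mem_iff_exists.mp hv
    obtain ⟨τ, hssτ, hpτ⟩ := exists_sameSuffix_patt hn v π₂
    exact ⟨s(v, τ), ⟨v, τ, rfl, hssτ, by rw [hpτ]; exact hE⟩, Sym2.mem_mk_left _ _⟩

end BigMachinery
section Indep

variable {n : ℕ} (hn : 4 ≤ n)

local notation "c4" => Fin.castLE hn

lemma no_exposed_edge {M₁ M₂ : Set (Sym2 (Equiv.Perm (Fin 4)))}
    (hind : ∀ π π' : Equiv.Perm (Fin 4), (permutahedron 4).Adj π π' →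
      (Covered M₁ π ∨ Covered M₁ π') ∧ (Covered M₂ π ∨ Covered M₂ π'))
    (hcov : ∀ π : Equiv.Perm (Fin 4), Covered M₁ π ∨ Covered M₂ π)
    (hcross : ∀ π π' : Equiv.Perm (Fin 4), Rel4 π π' →
      ((¬ Covered M₁ π ∧ Even ((π 3 : ℕ) + (π' 3 : ℕ)) → Covered M₂ π') ∧
       (¬ Covered M₁ π ∧ ¬ Even ((π 3 : ℕ) + (π' 3 : ℕ)) → Covered M₁ π') ∧
       (¬ Covered M₂ π ∧ Even ((π 3 : ℕ) + (π' 3 : ℕ)) → Covered M₁ π') ∧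
       (¬ Covered M₂ π ∧ ¬ Even ((π 3 : ℕ) + (π' 3 : ℕ)) → Covered M₂ π')))
    {σ τ : Equiv.Perm (Fin n)} (hadj : (permutahedron n).Adj σ τ) :
    Covered (bigMg n hn M₁ M₂) σ ∨ Covered (bigMg n hn M₁ M₂) τ := by
  suffices H : ∀ σ : Equiv.Perm (Fin n), ∀ i j : Fin n, (i : ℕ) + 1 = (j : ℕ) →
      Covered (bigMg n hn M₁ M₂) σ ∨ Covered (bigMg n hn M₁ M₂) (σ * Equiv.swap i j) by
    rw [permutahedron, SimpleGraph.fromRel_adj] at hadj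
    obtain ⟨-, ⟨i, j, hij, rfl⟩ | ⟨i, j, hij, rfl⟩⟩ := hadj
    · exact H σ i j hij
    · exact (H τ i j hij).symm
  clear hadj σ τ
  intro σ i j hij
  by_contra hc
  push_neg at hc
  obtain ⟨hcσ, hcτ⟩ := hc
  rw [covered_bigMg_iff] at hcσ hcτ
  rcases show (i : ℕ) < 3 ∨ (i : ℕ) = 3 ∨ 4 ≤ (i : ℕ) by omega with hi | hi | hi
  -- Case A : swap inside the first four positions
  · have hj4 : (j : ℕ) < 4 := by omega
    have hik : i = c4 (⟨(i : ℕ), by omega⟩ : Fin 4) := Fin.ext rfl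
    have hjk : j = c4 (⟨(j : ℕ), by omega⟩ : Fin 4) := Fin.ext rfl
    set k : Fin 4 := ⟨(i : ℕ), by omega⟩
    set k' : Fin 4 := ⟨(j : ℕ), by omega⟩
    have hτ2 : σ * Equiv.swap i j = σ * pext hn (Equiv.swap k k') := by
      rw [pext_swap, ← hik, ← hjk]
    rw [hτ2] at hcτ
    have hss : sameSuffix n σ (σ * pext hn (Equiv.swap k k')) :=
      sameSuffix_mul_pext hn σ _
    have hpatt : patt n hn (σ * pext hn (Equiv.swap k k'))
        = patt n hn σ * Equiv.swap k k' := patt_mul_pext hn σ _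
    have hkk : k ≠ k' := Fin.ne_of_val_ne (show (i : ℕ) ≠ (j : ℕ) by omega)
    have hne4 : patt n hn σ ≠ patt n hn (σ * pext hn (Equiv.swap k k')) := by
      intro h
      have h2 := congrArg (fun p => p k) (h.trans hpatt)
      simp only [Equiv.Perm.mul_apply, Equiv.swap_apply_left] at h2
      exact hkk ((patt n hn σ).injective h2)
    have hadj4 : (permutahedron 4).Adj (patt n hn σ)
        (patt n hn (σ * pext hn (Equiv.swap k k'))) := by
      rw [permutahedron, SimpleGraph.fromRel_adj]
      exact ⟨hne4, Or.inl ⟨k, k', hij, hpatt⟩⟩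
    have heps : epsNum n hn σ = epsNum n hn (σ * pext hn (Equiv.swap k k')) :=
      epsNum_of_sameSuffix hn hss
    have hind' := hind _ _ hadj4
    rw [← heps] at hcτ
    by_cases hev : Even (epsNum n hn σ)
    · rw [if_pos hev] at hcσ hcτ
      rcases hind'.1 with h | h
      exacts [hcσ h, hcτ h]
    · rw [if_neg hev] at hcσ hcτ
      rcases hind'.2 with h | h
      exacts [hcσ h, hcτ h]
  -- Case B : the crossing swap (positions 3 and 4)
  · have hj4 : (j : ℕ) = 4 := by omega
    obtain ⟨hRel, hpar⟩ := parity_swap_34 hn σ i j hi hj4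
    have hcr := hcross _ _ hRel
    by_cases h1 : Even (epsNum n hn σ) <;>
      by_cases h2 : Even (((patt n hn σ) 3 : ℕ)
        + ((patt n hn (σ * Equiv.swap i j)) 3 : ℕ))
    · have h3 : ¬ Even (epsNum n hn (σ * Equiv.swap i j)) := by
        rw [Nat.even_iff] at h1 h2 ⊢
        omega
      rw [if_pos h1] at hcσ
      rw [if_neg h3] at hcτ
      exact hcτ (hcr.1 ⟨hcσ, h2⟩)
    · have h3 : Even (epsNum n hn (σ * Equiv.swap i j)) := by
        rw [Nat.even_iff] at h1 h2 ⊢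
        omega
      rw [if_pos h1] at hcσ
      rw [if_pos h3] at hcτ
      exact hcτ (hcr.2.1 ⟨hcσ, h2⟩)
    · have h3 : Even (epsNum n hn (σ * Equiv.swap i j)) := by
        rw [Nat.even_iff] at h1 h2 ⊢
        omega
      rw [if_neg h1] at hcσ
      rw [if_pos h3] at hcτ
      exact hcτ (hcr.2.2.1 ⟨hcσ, h2⟩)
    · have h3 : ¬ Even (epsNum n hn (σ * Equiv.swap i j)) := by
        rw [Nat.even_iff] at h1 h2 ⊢
        omega
      rw [if_neg h1] at hcσ
      rw [if_neg h3] at hcτ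
      exact hcτ (hcr.2.2.2 ⟨hcσ, h2⟩)
  -- Case C : swap inside the suffix
  · obtain ⟨hpatt, hpar⟩ := parity_swap_ge4 hn σ i j hi hij
    rw [hpatt] at hcτ
    by_cases h1 : Even (epsNum n hn σ)
    · have h3 : ¬ Even (epsNum n hn (σ * Equiv.swap i j)) := by
        rw [Nat.even_iff] at h1 ⊢
        omega
      rw [if_pos h1] at hcσ
      rw [if_neg h3] at hcτ
      rcases hcov (patt n hn σ) with h | h
      exacts [hcσ h, hcτ h]
    · have h3 : Even (epsNum n hn (σ * Equiv.swap i j)) := by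
        rw [Nat.even_iff] at h1 ⊢
        omega
      rw [if_neg h1] at hcσ
      rw [if_pos h3] at hcτ
      rcases hcov (patt n hn σ) with h | h
      exacts [hcτ h, hcσ h]

lemma bigMg_isMaximal {M₁ M₂ : Set (Sym2 (Equiv.Perm (Fin 4)))}
    (h1 : IsMatching (permutahedron 4) M₁) (h2 : IsMatching (permutahedron 4) M₂)
    (hind : ∀ π π' : Equiv.Perm (Fin 4), (permutahedron 4).Adj π π' →
      (Covered M₁ π ∨ Covered M₁ π') ∧ (Covered M₂ π ∨ Covered M₂ π'))
    (hcov : ∀ π : Equiv.Perm (Fin 4), Covered M₁ π ∨ Covered M₂ π)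
    (hcross : ∀ π π' : Equiv.Perm (Fin 4), Rel4 π π' →
      ((¬ Covered M₁ π ∧ Even ((π 3 : ℕ) + (π' 3 : ℕ)) → Covered M₂ π') ∧
       (¬ Covered M₁ π ∧ ¬ Even ((π 3 : ℕ) + (π' 3 : ℕ)) → Covered M₁ π') ∧
       (¬ Covered M₂ π ∧ Even ((π 3 : ℕ) + (π' 3 : ℕ)) → Covered M₁ π') ∧
       (¬ Covered M₂ π ∧ ¬ Even ((π 3 : ℕ) + (π' 3 : ℕ)) → Covered M₂ π'))) :
    IsMaximalMatching (permutahedron n) (bigMg n hn M₁ M₂) := by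
  refine ⟨bigMg_isMatching hn h1 h2, ?_⟩
  intro M' hM' hsub
  refine Set.Subset.antisymm ?_ hsub
  intro e heM'
  induction e using Sym2.ind with
  | _ σ τ =>
    by_contra heB
    have hadj : (permutahedron n).Adj σ τ := (SimpleGraph.mem_edgeSet _).mp (hM'.1 heM')
    have hexp : ∀ v, v ∈ s(σ, τ) → ¬ Covered (bigMg n hn M₁ M₂) v := by
      rintro v hv ⟨f, hfB, hvf⟩
      have hfM' : f ∈ M' := hsub hfB
      have hne : s(σ, τ) ≠ f := fun h => heB (h ▸ hfB)
      exact hM'.2 _ heM' _ hfM' hne v hv hvf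
    rcases no_exposed_edge hn hind hcov hcross hadj with h | h
    · exact hexp σ (Sym2.mem_mk_left _ _) h
    · exact hexp τ (Sym2.mem_mk_right _ _) h

end Indep
section Counting

variable {n : ℕ} (hn : 4 ≤ n)

local notation "c4" => Fin.castLE hn

open Finset in
lemma bigMg_ncard {M₁ M₂ : Set (Sym2 (Equiv.Perm (Fin 4)))}
    (F₁ F₂ : Finset (Sym2 (Equiv.Perm (Fin 4)))) (hF1 : M₁ = ↑F₁) (hF2 : M₂ = ↑F₂)
    (hc1 : F₁.card = 8) (hc2 : F₂.card = 8) :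
    (bigMg n hn M₁ M₂).ncard * 3 = n.factorial := by
  classical
  set S : Finset (Equiv.Perm (Fin n)) :=
    Finset.univ.filter (fun ρ => patt n hn ρ = 1) with hS
  have hSmem : ∀ ρ, ρ ∈ S ↔ patt n hn ρ = 1 := by
    intro ρ; rw [hS, Finset.mem_filter]; simp
  -- the embedding of a copy of Π₄ over the suffix class of ρ
  have hgpatt : ∀ ρ ∈ S, ∀ π : Equiv.Perm (Fin 4), patt n hn (ρ * pext hn π) = π := by
    intro ρ hρ π
    rw [patt_mul_pext, (hSmem ρ).mp hρ, one_mul]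
  have hsortS : ∀ σ : Equiv.Perm (Fin n), σ * pext hn (patt n hn σ)⁻¹ ∈ S := by
    intro σ
    rw [hSmem, patt_mul_pext, mul_inv_cancel]
  have hsort_eq : ∀ σ : Equiv.Perm (Fin n),
      (σ * pext hn (patt n hn σ)⁻¹) * pext hn (patt n hn σ) = σ := by
    intro σ
    rw [mul_assoc, pext_mul, inv_mul_cancel, pext_one, mul_one]
  set B : Finset (Sym2 (Equiv.Perm (Fin n))) :=
    S.biUnion (fun ρ => (if Even (epsNum n hn ρ) then F₁ else F₂).image
      (Sym2.map (fun π => ρ * pext hn π))) with hB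
  have hBM : bigMg n hn M₁ M₂ = ↑B := by
    ext e
    constructor
    · rintro ⟨σ, τ, rfl, hss, hm⟩
      set ρ := σ * pext hn (patt n hn σ)⁻¹ with hρdef
      have hρS : ρ ∈ S := hsortS σ
      have hssρ : sameSuffix n σ ρ := sameSuffix_mul_pext hn σ _
      have hgσ : ρ * pext hn (patt n hn σ) = σ := hsort_eq σ
      have hgτ : ρ * pext hn (patt n hn τ) = τ := by
        refine (eq_of_sameSuffix_patt hn ?_ ?_).symm
        · exact sameSuffix_trans (sameSuffix_symm hss)
            (sameSuffix_trans hssρ (sameSuffix_mul_pext hn ρ _))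
        · exact (hgpatt ρ hρS _).symm
      have hepsρ : epsNum n hn ρ = epsNum n hn σ := (epsNum_of_sameSuffix hn hssρ).symm
      rw [Finset.mem_coe, hB, Finset.mem_biUnion]
      refine ⟨ρ, hρS, Finset.mem_image.mpr ⟨s(patt n hn σ, patt n hn τ), ?_, ?_⟩⟩
      · rw [hepsρ]
        rw [hF1, hF2] at hm
        by_cases hev : Even (epsNum n hn σ)
        · rw [if_pos hev] at hm ⊢; exact hm
        · rw [if_neg hev] at hm ⊢; exact hm
      · rw [Sym2.map_pair_eq, hgσ, hgτ]
    · intro he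
      rw [Finset.mem_coe, hB, Finset.mem_biUnion] at he
      obtain ⟨ρ, hρS, himg⟩ := he
      obtain ⟨E, hE, rfl⟩ := Finset.mem_image.mp himg
      induction E using Sym2.ind with
      | _ π π' =>
        rw [Sym2.map_pair_eq]
        refine ⟨ρ * pext hn π, ρ * pext hn π', rfl, ?_, ?_⟩
        · exact sameSuffix_trans (sameSuffix_symm (sameSuffix_mul_pext hn ρ _))
            (sameSuffix_mul_pext hn ρ _)
        · rw [hgpatt ρ hρS, hgpatt ρ hρS]
          have heps : epsNum n hn (ρ * pext hn π) = epsNum n hn ρ :=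
            (epsNum_of_sameSuffix hn (sameSuffix_mul_pext hn ρ _)).symm
          rw [heps, hF1, hF2]
          by_cases hev : Even (epsNum n hn ρ)
          · rw [if_pos hev] at hE ⊢; exact hE
          · rw [if_neg hev] at hE ⊢; exact hE
  -- cardinality of B
  have hdisj : ∀ ρ ∈ S, ∀ ρ' ∈ S, ρ ≠ ρ' →
      Disjoint ((if Even (epsNum n hn ρ) then F₁ else F₂).image
        (Sym2.map (fun π => ρ * pext hn π)))
        ((if Even (epsNum n hn ρ') then F₁ else F₂).image
        (Sym2.map (fun π => ρ' * pext hn π))) := by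
    intro ρ hρ ρ' hρ' hne
    rw [Finset.disjoint_left]
    intro a ha ha'
    obtain ⟨E, hE, rfl⟩ := Finset.mem_image.mp ha
    obtain ⟨E', hE', hEE⟩ := Finset.mem_image.mp ha'
    induction E using Sym2.ind with
    | _ π π₂ =>
      induction E' using Sym2.ind with
      | _ κ κ₂ =>
        rw [Sym2.map_pair_eq, Sym2.map_pair_eq] at hEE
        have hcase := Sym2.eq_iff.mp hEE
        have key : ∀ x y : Equiv.Perm (Fin 4),
            ρ' * pext hn x = ρ * pext hn y → ρ = ρ' := by
          intro x y hxy
          have hx : patt n hn (ρ' * pext hn x) = x := hgpatt ρ' hρ' x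
          have hy : patt n hn (ρ * pext hn y) = y := hgpatt ρ hρ y
          have hxy2 : x = y := by rw [← hx, ← hy, hxy]
          rw [hxy2] at hxy
          exact (mul_right_cancel hxy).symm
        rcases hcase with ⟨h1, -⟩ | ⟨h1, -⟩
        · exact hne (key κ π h1)
        · exact hne (key κ π₂ h1)
  have hcardR : ∀ ρ ∈ S, ((if Even (epsNum n hn ρ) then F₁ else F₂).image
      (Sym2.map (fun π => ρ * pext hn π))).card = 8 := by
    intro ρ hρ
    have hinj : Function.Injective (fun π : Equiv.Perm (Fin 4) => ρ * pext hn π) := by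
      intro a b hab
      rw [← hgpatt ρ hρ a, ← hgpatt ρ hρ b]
      simp only [hab]
    rw [Finset.card_image_of_injective _ (Sym2.map.injective hinj)]
    split_ifs
    exacts [hc1, hc2]
  have hcardB : B.card = S.card * 8 := by
    rw [hB, Finset.card_biUnion hdisj]
    rw [Finset.sum_congr rfl hcardR, Finset.sum_const, smul_eq_mul]
  -- 24 * S.card = n!
  have hbij : Function.Bijective
      (fun p : Equiv.Perm (Fin 4) × {ρ : Equiv.Perm (Fin n) // ρ ∈ S} =>
        (p.2 : Equiv.Perm (Fin n)) * pext hn p.1) := by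
    constructor
    · rintro ⟨π, ρ, hρ⟩ ⟨π', ρ', hρ'⟩ hkey
      simp only at hkey
      have h1 : π = π' := by
        rw [← hgpatt ρ hρ π, ← hgpatt ρ' hρ' π', hkey]
      rw [h1] at hkey
      have h2 : ρ = ρ' := mul_right_cancel hkey
      simp [h1, h2]
    · intro σ
      refine ⟨⟨patt n hn σ, ⟨σ * pext hn (patt n hn σ)⁻¹, hsortS σ⟩⟩, ?_⟩
      exact hsort_eq σ
  have hcount := Fintype.card_congr (Equiv.ofBijective _ hbij)
  rw [Fintype.card_prod, Fintype.card_coe, Fintype.card_perm, Fintype.card_perm,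
    Fintype.card_fin, Fintype.card_fin] at hcount
  have h24 : (4 : ℕ).factorial = 24 := rfl
  rw [h24] at hcount
  rw [hBM, Set.ncard_coe_finset, hcardB]
  omega

end Counting

section Final

lemma isMatching_Mplus : IsMatching (permutahedron 4) Mplus := by
  rw [Mplus_eq]
  constructor
  · intro e
    induction e using Sym2.ind with
    | _ a b =>
      intro he
      exact (SimpleGraph.mem_edgeSet _).mpr (fact_edges a b (Or.inl (Finset.mem_coe.mp he)))
  · intro e he f hf hne v hv
    exact fact_disj MplusF (by simp) e (Finset.mem_coe.mp he) f (Finset.mem_coe.mp hf)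
      hne v hv

lemma isMatching_Mminus : IsMatching (permutahedron 4) Mminus := by
  rw [Mminus_eq]
  constructor
  · intro e
    induction e using Sym2.ind with
    | _ a b =>
      intro he
      exact (SimpleGraph.mem_edgeSet _).mpr (fact_edges a b (Or.inr (Finset.mem_coe.mp he)))
  · intro e he f hf hne v hv
    exact fact_disj MminusF (by simp) e (Finset.mem_coe.mp he) f (Finset.mem_coe.mp hf)
      hne v hv

lemma covered_Mplus_iff (v : Equiv.Perm (Fin 4)) : Covered Mplus v ↔ CovF MplusF v := by
  rw [Mplus_eq]; exact covered_coe _ _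

lemma covered_Mminus_iff (v : Equiv.Perm (Fin 4)) : Covered Mminus v ↔ CovF MminusF v := by
  rw [Mminus_eq]; exact covered_coe _ _

lemma hindPM : ∀ π π' : Equiv.Perm (Fin 4), (permutahedron 4).Adj π π' →
    (Covered Mplus π ∨ Covered Mplus π') ∧ (Covered Mminus π ∨ Covered Mminus π') := by
  intro π π' h
  have := fact_indep π π' h
  simp only [covered_Mplus_iff, covered_Mminus_iff]
  exact this

lemma hindMP : ∀ π π' : Equiv.Perm (Fin 4), (permutahedron 4).Adj π π' →
    (Covered Mminus π ∨ Covered Mminus π') ∧ (Covered Mplus π ∨ Covered Mplus π') := by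
  intro π π' h
  exact ⟨(hindPM π π' h).2, (hindPM π π' h).1⟩

lemma hcovPM : ∀ π : Equiv.Perm (Fin 4), Covered Mplus π ∨ Covered Mminus π := by
  intro π
  simp only [covered_Mplus_iff, covered_Mminus_iff]
  exact fact_cover π

lemma hcovMP : ∀ π : Equiv.Perm (Fin 4), Covered Mminus π ∨ Covered Mplus π :=
  fun π => (hcovPM π).symm

lemma hcrossPM : ∀ π π' : Equiv.Perm (Fin 4), Rel4 π π' →
    ((¬ Covered Mplus π ∧ Even ((π 3 : ℕ) + (π' 3 : ℕ)) → Covered Mminus π') ∧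
     (¬ Covered Mplus π ∧ ¬ Even ((π 3 : ℕ) + (π' 3 : ℕ)) → Covered Mplus π') ∧
     (¬ Covered Mminus π ∧ Even ((π 3 : ℕ) + (π' 3 : ℕ)) → Covered Mplus π') ∧
     (¬ Covered Mminus π ∧ ¬ Even ((π 3 : ℕ) + (π' 3 : ℕ)) → Covered Mminus π')) := by
  intro π π' h
  have := fact_cross π π' h
  simp only [covered_Mplus_iff, covered_Mminus_iff]
  exact this

lemma hcrossMP : ∀ π π' : Equiv.Perm (Fin 4), Rel4 π π' →
    ((¬ Covered Mminus π ∧ Even ((π 3 : ℕ) + (π' 3 : ℕ)) → Covered Mplus π') ∧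
     (¬ Covered Mminus π ∧ ¬ Even ((π 3 : ℕ) + (π' 3 : ℕ)) → Covered Mminus π') ∧
     (¬ Covered Mplus π ∧ Even ((π 3 : ℕ) + (π' 3 : ℕ)) → Covered Mminus π') ∧
     (¬ Covered Mplus π ∧ ¬ Even ((π 3 : ℕ) + (π' 3 : ℕ)) → Covered Mplus π')) := by
  intro π π' h
  obtain ⟨c1, c2, c3, c4⟩ := hcrossPM π π' h
  exact ⟨c3, c4, c1, c2⟩

end Final

theorem stmt15 (n : ℕ) (hn : 4 ≤ n) :
    IsMaximalMatching (permutahedron n) (bigM n hn) ∧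
    IsMaximalMatching (permutahedron n) (bigM' n hn) ∧
    (bigM n hn).ncard * 3 = n.factorial ∧
    (bigM' n hn).ncard * 3 = n.factorial ∧
    exposedSet (bigM n hn) ∩ exposedSet (bigM' n hn) = ∅ ∧
    ∀ σ : Equiv.Perm (Fin n), Covered (bigM n hn) σ ∨ Covered (bigM' n hn) σ := by
  have hcover : ∀ σ : Equiv.Perm (Fin n),
      Covered (bigM n hn) σ ∨ Covered (bigM' n hn) σ := by
    intro σ
    rw [bigM_eq_bigMg, bigM'_eq_bigMg, covered_bigMg_iff, covered_bigMg_iff]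
    by_cases hev : Even (epsNum n hn σ)
    · rw [if_pos hev, if_pos hev]
      exact hcovPM (patt n hn σ)
    · rw [if_neg hev, if_neg hev]
      exact hcovMP (patt n hn σ)
  refine ⟨?_, ?_, ?_, ?_, ?_, hcover⟩
  · rw [bigM_eq_bigMg]
    exact bigMg_isMaximal hn isMatching_Mplus isMatching_Mminus hindPM hcovPM hcrossPM
  · rw [bigM'_eq_bigMg]
    exact bigMg_isMaximal hn isMatching_Mminus isMatching_Mplus hindMP hcovMP hcrossMP
  · rw [bigM_eq_bigMg]
    exact bigMg_ncard hn MplusF MminusF Mplus_eq Mminus_eq fact_card.1 fact_card.2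
  · rw [bigM'_eq_bigMg]
    exact bigMg_ncard hn MminusF MplusF Mminus_eq Mplus_eq fact_card.2 fact_card.1
  · rw [Set.eq_empty_iff_forall_notMem]
    rintro σ ⟨ha, hb⟩
    rcases hcover σ with h | h
    · exact ha h
    · exact hb h
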